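/- With the definitions in the context, Γ ⊆ int S_ε (the interior of S_ε). More precisely: for every x ∈ ℝ^n, h(x) < h̄_*(x); hence if h(x) ≥ ε then h̄_*(x) > ε, and since h̄_* is continuous the set {x : h̄_*(x) > ε} is open and contained in S_ε, so Γ ⊆ {x : h(x) ≥ ε} ⊆ {x : h̄_*(x) > ε} ⊆ int S_ε. -/

import Mathlib

open Set

/-- With `T_s = T/N`, semiflows `φ_j` (`φ_j(x,0) = x`), sampled barrier
functions `h̄_{*_j}(x) = min{h_{b_j}(φ_j(x,N·T_s)), min_{i∈{0,…,N}} h_s(φ_j(x,i·T_s))}`,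
continuous `h̄_*(x) = max_j h̄_{*_j}(x)`, soft-minimum barrier functions
`h_j(x) = softmin_{ρ₁}(h_s(φ_j(x,0)), …, h_s(φ_j(x,N·T_s)), h_{b_j}(φ_j(x,N·T_s)))`,
soft-maximum combination `h(x) = softmax_{ρ₂}(h_1(x),…,h_ν(x))`,
`S_ε = {x : h̄_*(x) ≥ ε}` and `Γ ⊆ {x : h(x) ≥ ε}`: for every `x`, `h(x) < h̄_*(x)`;
hence `Γ ⊆ {x : h̄_*(x) > ε}`, which is open and contained in `S_ε`, so
`Γ ⊆ int S_ε`. -/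
theorem Gamma_subset_interior_S_eps
    (n ν N : ℕ) (hn : 0 < n) (hν : 0 < ν) (hN : 0 < N)
    (T Ts ρ₁ ρ₂ ε : ℝ) (hT : 0 < T) (hTs : Ts = T / N)
    (hρ₁ : 0 < ρ₁) (hρ₂ : 0 < ρ₂) (hε : 0 ≤ ε)
    (φ : Fin ν → EuclideanSpace ℝ (Fin n) → ℝ → EuclideanSpace ℝ (Fin n))
    (hφ0 : ∀ j x, φ j x 0 = x)
    (hs : EuclideanSpace ℝ (Fin n) → ℝ)
    (hb : Fin ν → EuclideanSpace ℝ (Fin n) → ℝ)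
    (hbarStarj : Fin ν → EuclideanSpace ℝ (Fin n) → ℝ)
    (hhbarStarj : ∀ j x, hbarStarj j x =
      min (hb j (φ j x ((N : ℝ) * Ts)))
        ((Finset.range (N + 1)).inf' Finset.nonempty_range_add_one
          (fun i => hs (φ j x ((i : ℝ) * Ts)))))
    (hbarStar : EuclideanSpace ℝ (Fin n) → ℝ)
    (hhbarStar : ∀ x, hbarStar x =
      Finset.univ.sup' ⟨⟨0, hν⟩, Finset.mem_univ _⟩ (fun j => hbarStarj j x))
    (hbarStar_cont : Continuous hbarStar)
    (hj : Fin ν → EuclideanSpace ℝ (Fin n) → ℝ)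
    (hhj : ∀ j x, hj j x =
      -(1 / ρ₁) * Real.log
        ((∑ i ∈ Finset.range (N + 1), Real.exp (-(ρ₁ * hs (φ j x ((i : ℝ) * Ts))))) +
          Real.exp (-(ρ₁ * hb j (φ j x ((N : ℝ) * Ts))))))
    (h : EuclideanSpace ℝ (Fin n) → ℝ)
    (hh : ∀ x, h x =
      (1 / ρ₂) * Real.log (∑ j : Fin ν, Real.exp (ρ₂ * hj j x)) - Real.log ν / ρ₂)
    (Sε : Set (EuclideanSpace ℝ (Fin n)))
    (hSε : Sε = {x | ε ≤ hbarStar x})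
    (Γ : Set (EuclideanSpace ℝ (Fin n)))
    (hΓ : Γ ⊆ {x | ε ≤ h x}) :
    (∀ x, h x < hbarStar x) ∧
    Γ ⊆ {x | ε < hbarStar x} ∧
    IsOpen {x : EuclideanSpace ℝ (Fin n) | ε < hbarStar x} ∧
    {x : EuclideanSpace ℝ (Fin n) | ε < hbarStar x} ⊆ Sε ∧
    Γ ⊆ interior Sε := by

  have key : ∀ x, h x < hbarStar x := by
    intro x
    have ne : (Finset.univ : Finset (Fin ν)).Nonempty := ⟨⟨0, hν⟩, Finset.mem_univ _⟩
    -- Step 1: each soft-minimum is strictly below its hard minimum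
    have hstep1 : ∀ j, hj j x < hbarStarj j x := by
      intro j
      set w := hb j (φ j x ((N : ℝ) * Ts)) with hw
      set I := (Finset.range (N + 1)).inf' Finset.nonempty_range_add_one
        (fun i => hs (φ j x ((i : ℝ) * Ts))) with hI
      set S := (∑ i ∈ Finset.range (N + 1), Real.exp (-(ρ₁ * hs (φ j x ((i : ℝ) * Ts))))) +
          Real.exp (-(ρ₁ * w)) with hSdef
      have hsumpos : 0 < ∑ i ∈ Finset.range (N + 1),
          Real.exp (-(ρ₁ * hs (φ j x ((i : ℝ) * Ts)))) :=
        Finset.sum_pos (fun i _ => Real.exp_pos _) Finset.nonempty_range_add_one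
      have hSpos : 0 < S := by positivity
      set m := hbarStarj j x with hm
      have hmdef : m = min w I := hhbarStarj j x
      have hexp : Real.exp (-(ρ₁ * m)) < S := by
        rcases min_cases w I with ⟨h1, h2⟩ | ⟨h1, h2⟩
        · -- m = w
          rw [hmdef, h1]
          have : Real.exp (-(ρ₁ * w)) ≤ Real.exp (-(ρ₁ * w)) := le_refl _
          calc Real.exp (-(ρ₁ * w)) <
              (∑ i ∈ Finset.range (N + 1),
                Real.exp (-(ρ₁ * hs (φ j x ((i : ℝ) * Ts))))) + Real.exp (-(ρ₁ * w)) := by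
                linarith
            _ = S := rfl
        · -- m = I
          obtain ⟨i0, hi0mem, hi0⟩ := Finset.exists_mem_eq_inf' Finset.nonempty_range_add_one
            (fun i => hs (φ j x ((i : ℝ) * Ts)))
          have hle : Real.exp (-(ρ₁ * I)) ≤ ∑ i ∈ Finset.range (N + 1),
              Real.exp (-(ρ₁ * hs (φ j x ((i : ℝ) * Ts)))) := by
            rw [hI, hi0]
            exact Finset.single_le_sum
              (f := fun i : ℕ => Real.exp (-(ρ₁ * hs (φ j x ((i : ℝ) * Ts)))))
              (s := Finset.range (N + 1))
              (fun i _ => (Real.exp_pos _).le) hi0mem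
          rw [hmdef, h1]
          have := Real.exp_pos (-(ρ₁ * w))
          calc Real.exp (-(ρ₁ * I)) <
              (∑ i ∈ Finset.range (N + 1),
                Real.exp (-(ρ₁ * hs (φ j x ((i : ℝ) * Ts))))) + Real.exp (-(ρ₁ * w)) := by
                linarith
            _ = S := rfl
      have hlog : -(ρ₁ * m) < Real.log S := (Real.lt_log_iff_exp_lt hSpos).2 hexp
      have hjx : hj j x = -(1 / ρ₁) * Real.log S := hhj j x
      rw [hjx, show -(1 / ρ₁) * Real.log S = -Real.log S / ρ₁ by ring, div_lt_iff₀ hρ₁]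
      nlinarith
    -- Step 2: soft-maximum bound
    set M := Finset.univ.sup' ne (fun j => hj j x) with hM
    have hhM : h x ≤ M := by
      have hsum : (∑ j : Fin ν, Real.exp (ρ₂ * hj j x)) ≤ (ν : ℝ) * Real.exp (ρ₂ * M) := by
        calc (∑ j : Fin ν, Real.exp (ρ₂ * hj j x))
            ≤ ∑ _j : Fin ν, Real.exp (ρ₂ * M) := by
              apply Finset.sum_le_sum
              intro j _
              exact Real.exp_le_exp.2 (mul_le_mul_of_nonneg_left
                (Finset.le_sup' (fun j => hj j x) (Finset.mem_univ j)) hρ₂.le)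
          _ = (ν : ℝ) * Real.exp (ρ₂ * M) := by
              simp [Finset.sum_const, Finset.card_univ, nsmul_eq_mul]
      have hspos : 0 < ∑ j : Fin ν, Real.exp (ρ₂ * hj j x) :=
        Finset.sum_pos (fun j _ => Real.exp_pos _) ne
      have hνpos : (0 : ℝ) < (ν : ℝ) := by exact_mod_cast hν
      have hlog : Real.log (∑ j : Fin ν, Real.exp (ρ₂ * hj j x)) ≤
          Real.log ν + ρ₂ * M := by
        calc Real.log (∑ j : Fin ν, Real.exp (ρ₂ * hj j x))
            ≤ Real.log ((ν : ℝ) * Real.exp (ρ₂ * M)) := Real.log_le_log hspos hsum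
          _ = Real.log ν + ρ₂ * M := by rw [Real.log_mul hνpos.ne' (Real.exp_pos _).ne',
              Real.log_exp]
      rw [hh x]
      have h1 : (1 / ρ₂) * Real.log (∑ j : Fin ν, Real.exp (ρ₂ * hj j x)) ≤
          (1 / ρ₂) * (Real.log ν + ρ₂ * M) :=
        mul_le_mul_of_nonneg_left hlog (by positivity)
      have h2 : (1 / ρ₂) * (Real.log ν + ρ₂ * M) - Real.log ν / ρ₂ = M := by
        field_simp
        ring
      linarith
    -- Step 3: combine
    obtain ⟨j0, _, hj0⟩ := Finset.exists_mem_eq_sup' ne (fun j => hj j x)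
    have : M < hbarStarj j0 x := lt_of_le_of_lt (le_of_eq hj0) (hstep1 j0)
    have hle2 : hbarStarj j0 x ≤ hbarStar x := by
      rw [hhbarStar x]
      exact Finset.le_sup' (f := fun j => hbarStarj j x) (Finset.mem_univ j0)
    linarith
  have hsub1 : Γ ⊆ {x | ε < hbarStar x} := fun x hx =>
    lt_of_le_of_lt (hΓ hx) (key x)
  have hopen : IsOpen {x : EuclideanSpace ℝ (Fin n) | ε < hbarStar x} :=
    isOpen_lt continuous_const hbarStar_cont
  have hsub2 : {x : EuclideanSpace ℝ (Fin n) | ε < hbarStar x} ⊆ Sε := by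
    rw [hSε]; intro x hx
    simp only [Set.mem_setOf_eq] at hx ⊢
    linarith
  exact ⟨key, hsub1, hopen, hsub2,
    fun x hx => interior_maximal hsub2 hopen (hsub1 hx)⟩
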